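/- Let f ∈ L^p(I) for a bounded open interval I, and let Φ : J → I be a C¹ increasing bijection with Φ' > 0, with f_Φ(x) = f(Φ(x))Φ'(x) on J and 0 elsewhere. Then the p-Cramér distance satisfies C_p(f, f_Φ) ≤ ‖f‖_{L^p} · ε(Φ), where ε(Φ) = max_x |x − Φ(x)|. -/

import Mathlib

open MeasureTheory Real Set
open scoped ENNReal
open scoped Interval

lemma holder_set (K : ℝ → ℝ≥0∞) (hK : AEMeasurable K volume) {A : Set ℝ}
    (hA : MeasurableSet A) {r : ℝ} (hr : 1 ≤ r) {E : ℝ≥0∞}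
    (hAE : volume A ≤ E) :
    (∫⁻ t in A, K t) ^ r ≤ E ^ (r - 1) * ∫⁻ t in A, K t ^ r := by
  rcases eq_or_lt_of_le hr with h1 | h1
  · simp only [← h1, ENNReal.rpow_one, sub_self, ENNReal.rpow_zero, one_mul]
    exact le_rfl
  · have hq := Real.HolderConjugate.conjExponent h1
    set q := Real.conjExponent r with hqdef
    have h1' : (∫⁻ t in A, K t) = ∫⁻ t in A, (K t * (fun (_:ℝ) => (1:ℝ≥0∞)) t) := by simp
    have hH := ENNReal.lintegral_mul_le_Lp_mul_Lq (volume.restrict A) hq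
      (hK.restrict) aemeasurable_const (g := fun _ => (1:ℝ≥0∞))
    simp only [Pi.mul_apply] at hH
    rw [← h1'] at hH
    have hone : (∫⁻ _ in A, (1:ℝ≥0∞) ^ q) = volume A := by
      simp [ENNReal.one_rpow]
    rw [hone] at hH
    calc (∫⁻ t in A, K t) ^ r
        ≤ ((∫⁻ t in A, K t ^ r) ^ (1/r) * volume A ^ (1/q)) ^ r :=
          ENNReal.rpow_le_rpow hH (by positivity)
      _ = (∫⁻ t in A, K t ^ r) * volume A ^ (r/q) := by
          rw [ENNReal.mul_rpow_of_nonneg _ _ (by positivity), ← ENNReal.rpow_mul,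
            ← ENNReal.rpow_mul, one_div, inv_mul_cancel₀ (by positivity), ENNReal.rpow_one]
          ring_nf
      _ = (∫⁻ t in A, K t ^ r) * volume A ^ (r - 1) := by
          rw [hq.div_conj_eq_sub_one]
      _ ≤ (∫⁻ t in A, K t ^ r) * E ^ (r - 1) := by
          gcongr <;> first | linarith | exact hAE
      _ = E ^ (r - 1) * ∫⁻ t in A, K t ^ r := mul_comm _ _

/-- Sharper 1D deformation bound for monotonically increasing deformations:
if `Φ : J → I` is a `C¹` increasing bijection between bounded open intervals,
`f ∈ L^p(I)` (extended by zero), and `f_Φ(x) = f(Φ(x)) Φ'(x)` on `J` and `0` elsewhere,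
then `C_p(f, f_Φ) ≤ ‖f‖_{L^p} · ε(Φ)`, where `ε(Φ) = sup_{x ∈ J} |x − Φ(x)|`. -/
theorem cramer_monotone_deformation (p : ℝ≥0∞) (hp : 1 ≤ p)
    (a b c e : ℝ) (hab : a < b) (hce : c < e)
    (f : ℝ → ℝ) (hf : MemLp f p) (hf0 : ∀ x, x ∉ Ioo a b → f x = 0)
    (Φ Φ' : ℝ → ℝ)
    (hbij : BijOn Φ (Ioo c e) (Ioo a b))
    (hderiv : ∀ x ∈ Ioo c e, HasDerivAt Φ (Φ' x) x)
    (hpos : ∀ x ∈ Ioo c e, 0 < Φ' x)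
    (hcont : ContinuousOn Φ' (Ioo c e))
    (fΦ : ℝ → ℝ)
    (hfΦ : ∀ x, fΦ x = if x ∈ Ioo c e then f (Φ x) * Φ' x else 0) :
    eLpNorm (fun x => ∫ t in Iic x, (f t - fΦ t)) p volume ≤
      eLpNorm f p volume *
        ENNReal.ofReal (sSup ((fun x => |x - Φ x|) '' Ioo c e)) := by
  set ε := sSup ((fun x => |x - Φ x|) '' Ioo c e) with hεdef
  -- geometry of Φ
  have hΦcont : ContinuousOn Φ (Ioo c e) := fun x hx =>
    (hderiv x hx).continuousAt.continuousWithinAt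
  have hmono : StrictMonoOn Φ (Ioo c e) := by
    apply strictMonoOn_of_deriv_pos (convex_Ioo c e) hΦcont
    intro x hx
    rw [isOpen_Ioo.interior_eq] at hx
    rw [(hderiv x hx).deriv]
    exact hpos x hx
  have hbdd : BddAbove ((fun x => |x - Φ x|) '' Ioo c e) := by
    refine ⟨max |c| |e| + max |a| |b|, ?_⟩
    rintro y ⟨x, hx, rfl⟩
    have h1 : |x| ≤ max |c| |e| := abs_le_max_abs_abs hx.1.le hx.2.le
    have h2 : |Φ x| ≤ max |a| |b| := by
      have := hbij.mapsTo hx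
      exact abs_le_max_abs_abs this.1.le this.2.le
    calc |x - Φ x| ≤ |x| + |Φ x| := abs_sub _ _
      _ ≤ _ := add_le_add h1 h2
  have hεmem : ∀ x ∈ Ioo c e, |x - Φ x| ≤ ε := fun x hx =>
    le_csSup hbdd ⟨x, hx, rfl⟩
  have hmid : (c + e) / 2 ∈ Ioo c e := ⟨by linarith, by linarith⟩
  have hε0 : 0 ≤ ε := le_trans (abs_nonneg _) (hεmem _ hmid)
  have hca : c - a ≤ ε := by
    by_contra h
    push_neg at h
    set a' := (a + min b (c - ε)) / 2 with ha'
    have hm : a < min b (c - ε) := lt_min hab (by linarith)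
    have ha'1 : a < a' := by simp only [ha']; linarith
    have ha'2 : a' < min b (c - ε) := by simp only [ha']; linarith
    obtain ⟨s, hs, hΦs⟩ := hbij.surjOn
      (⟨ha'1, lt_of_lt_of_le ha'2 (min_le_left _ _)⟩ : a' ∈ Ioo a b)
    have hy : (c + s) / 2 ∈ Ioo c e := ⟨by linarith [hs.1], by linarith [hs.1, hs.2]⟩
    have hys : (c + s) / 2 < s := by linarith [hs.1]
    have h1 : Φ ((c + s) / 2) < a' := hΦs ▸ hmono hy hs hys
    have h2 := le_trans (le_abs_self _) (hεmem _ hy)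
    have h3 : a' < c - ε := lt_of_lt_of_le ha'2 (min_le_right _ _)
    have h4 : c < (c + s) / 2 := hy.1
    linarith
  have hbe : b - e ≤ ε := by
    by_contra h
    push_neg at h
    set b' := (max a (e + ε) + b) / 2 with hb'
    have hm : max a (e + ε) < b := max_lt hab (by linarith)
    have hb'1 : b' < b := by simp only [hb']; linarith
    have hb'2 : max a (e + ε) < b' := by simp only [hb']; linarith
    obtain ⟨s, hs, hΦs⟩ := hbij.surjOn
      (⟨lt_of_le_of_lt (le_max_left _ _) hb'2, hb'1⟩ : b' ∈ Ioo a b)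
    have hy : (s + e) / 2 ∈ Ioo c e := ⟨by linarith [hs.1, hs.2], by linarith [hs.2]⟩
    have hys : s < (s + e) / 2 := by linarith [hs.2]
    have h1 : b' < Φ ((s + e) / 2) := hΦs ▸ hmono hs hy hys
    have h2 := le_trans (neg_le_abs _) (hεmem _ hy)
    have h3 : e + ε < b' := lt_of_le_of_lt (le_max_right _ _) hb'2
    have h4 : (s + e) / 2 < e := hy.2
    linarith
  -- integrability
  have hfm : AEStronglyMeasurable f volume := hf.1
  have hre : IntegrableOn f (Ioo a b) volume := by
    haveI : IsFiniteMeasure (volume.restrict (Ioo a b)) :=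
      ⟨by rw [Measure.restrict_apply_univ]; exact measure_Ioo_lt_top⟩
    exact (hf.restrict _).integrable hp
  have hfeq : f = (Ioo a b).indicator f := by
    ext x
    by_cases hx : x ∈ Ioo a b
    · simp [hx]
    · simp [hx, hf0 x hx]
  have hfint : Integrable f volume := by
    rw [hfeq]
    exact hre.integrable_indicator measurableSet_Ioo
  have hkey : IntegrableOn (fun x => |Φ' x| • f (Φ x)) (Ioo c e) volume := by
    rw [← integrableOn_image_iff_integrableOn_abs_deriv_smul measurableSet_Ioo
        (fun x hx => (hderiv x hx).hasDerivWithinAt) hbij.injOn f]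
    rw [hbij.image_eq]
    exact hre
  have hgeq : fΦ = (Ioo c e).indicator (fun x => |Φ' x| • f (Φ x)) := by
    ext x
    by_cases hx : x ∈ Ioo c e
    · simp only [hfΦ x, hx, if_true, indicator_of_mem hx, smul_eq_mul,
        abs_of_pos (hpos x hx)]
      ring
    · simp [hfΦ x, hx]
  have hgint : Integrable fΦ volume := by
    rw [hgeq]
    exact hkey.integrable_indicator measurableSet_Ioo
  -- the transport map
  set T : ℝ → ℝ := fun x => if x ∈ Ioo c e then Φ x else if x ≤ c then min x a else max x b
    with hTdef
  have hT1 : ∀ x, x ≤ c → T x = min x a := by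
    intro x hx
    simp only [hTdef, mem_Ioo]
    rw [if_neg (by push_neg; intro h; linarith), if_pos hx]
  have hT2 : ∀ x ∈ Ioo c e, T x = Φ x := by
    intro x hx
    simp only [hTdef, if_pos hx]
  have hT3 : ∀ x, e ≤ x → T x = max x b := by
    intro x hx
    simp only [hTdef, mem_Ioo]
    rw [if_neg (by push_neg; intro h; linarith), if_neg (by linarith)]
  have hTmono : Monotone T := by
    intro x y hxy
    rcases le_or_gt x c with hx | hx
    · rw [hT1 x hx]
      rcases le_or_gt y c with hy | hy
      · rw [hT1 y hy]
        exact min_le_min hxy le_rfl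
      · rcases lt_or_ge y e with hy2 | hy2
        · rw [hT2 y ⟨hy, hy2⟩]
          exact le_trans (min_le_right _ _) (hbij.mapsTo ⟨hy, hy2⟩).1.le
        · rw [hT3 y hy2]
          exact le_trans (min_le_right _ _) (le_trans hab.le (le_max_right _ _))
    · rcases lt_or_ge x e with hx2 | hx2
      · have hxI : x ∈ Ioo c e := ⟨hx, hx2⟩
        rw [hT2 x hxI]
        rcases le_or_gt y c with hy | hy
        · exact absurd (lt_of_lt_of_le hx (le_trans hxy hy)) (lt_irrefl c)
        · rcases lt_or_ge y e with hy2 | hy2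
          · rw [hT2 y ⟨hy, hy2⟩]
            exact hmono.monotoneOn hxI ⟨hy, hy2⟩ hxy
          · rw [hT3 y hy2]
            exact le_trans (hbij.mapsTo hxI).2.le (le_max_right _ _)
      · rw [hT3 x hx2, hT3 y (le_trans hx2 hxy)]
        exact max_le_max hxy le_rfl
  have hTdist : ∀ x, |x - T x| ≤ ε := by
    intro x
    rcases le_or_gt x c with hx | hx
    · rw [hT1 x hx]
      rcases le_total x a with h | h
      · simpa [min_eq_left h] using hε0
      · rw [min_eq_right h, abs_of_nonneg (by linarith)]
        linarith
    · rcases lt_or_ge x e with hx2 | hx2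
      · rw [hT2 x ⟨hx, hx2⟩]
        exact hεmem x ⟨hx, hx2⟩
      · rw [hT3 x hx2]
        rcases le_total b x with h | h
        · simpa [max_eq_left h] using hε0
        · rw [max_eq_right h, abs_sub_comm, abs_of_nonneg (by linarith)]
          linarith
  have hTmeas : Measurable T := hTmono.measurable
  -- cumulative identity
  have himage : ∀ x ∈ Ioo c e, Φ '' Ioo c x = Ioo a (Φ x) := by
    intro x hx
    ext y
    constructor
    · rintro ⟨t, ht, rfl⟩
      have htI : t ∈ Ioo c e := ⟨ht.1, lt_trans ht.2 hx.2⟩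
      exact ⟨(hbij.mapsTo htI).1, hmono htI hx ht.2⟩
    · rintro hy
      have hyI : y ∈ Ioo a b := ⟨hy.1, lt_trans hy.2 (hbij.mapsTo hx).2⟩
      obtain ⟨t, ht, rfl⟩ := hbij.surjOn hyI
      refine ⟨t, ⟨ht.1, ?_⟩, rfl⟩
      by_contra hcon
      push_neg at hcon
      exact absurd (hmono.monotoneOn hx ht hcon) (not_le.mpr hy.2)
  have hIicf : ∀ y, Iic y ∩ Ioo a b = Ioc a y ∩ Ioo a b := by
    intro y
    ext t
    simp only [mem_inter_iff, mem_Iic, mem_Ioo, mem_Ioc]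
    tauto
  have hFRT : ∀ y, (∫ t in Iic y, f t) = ∫ t in Ioc a y, (Ioo a b).indicator f t := by
    intro y
    conv_lhs => rw [hfeq]
    rw [setIntegral_indicator measurableSet_Ioo, hIicf y,
      ← setIntegral_indicator measurableSet_Ioo]
  have hCoV : ∀ x ∈ Ioo c e, (∫ t in Ioo c x, (fun t => |Φ' t| • f (Φ t)) t)
      = ∫ t in Ioo a (Φ x), f t := by
    intro x hx
    rw [← integral_image_eq_integral_abs_deriv_smul measurableSet_Ioo
      (fun t ht => (hderiv t (Ioo_subset_Ioo_right hx.2.le ht)).hasDerivWithinAt)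
      (hbij.injOn.mono (Ioo_subset_Ioo_right hx.2.le)) f]
    rw [himage x hx]
  have hFT : ∀ x, (∫ t in Iic x, fΦ t) = ∫ t in Iic (T x), f t := by
    intro x
    rcases le_or_gt x c with hx | hx
    · rw [hT1 x hx]
      rw [setIntegral_congr_fun measurableSet_Iic (g := fun _ => (0:ℝ))
        (fun t (ht : t ≤ x) => by
          rw [hfΦ t, if_neg]
          simp only [mem_Ioo]
          push_neg
          intro h
          linarith), integral_zero]
      rw [setIntegral_congr_fun measurableSet_Iic (g := fun _ => (0:ℝ))
        (fun t (ht : t ≤ min x a) => hf0 t (by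
          simp only [mem_Ioo]
          push_neg
          intro h
          exfalso
          exact absurd (le_trans ht (min_le_right x a)) (not_le.mpr h))), integral_zero]
    · rcases lt_or_ge x e with hx2 | hx2
      · have hxI : x ∈ Ioo c e := ⟨hx, hx2⟩
        rw [hT2 x hxI, hgeq]
        rw [setIntegral_indicator measurableSet_Ioo]
        have h1 : Iic x ∩ Ioo c e = Ioc c x := by
          ext t
          simp only [mem_inter_iff, mem_Iic, mem_Ioo, mem_Ioc]
          constructor
          · rintro ⟨h1, h2, h3⟩; exact ⟨h2, h1⟩
          · rintro ⟨h1, h2⟩; exact ⟨h2, h1, lt_of_le_of_lt h2 hx2⟩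
        rw [h1, integral_Ioc_eq_integral_Ioo, hCoV x hxI, hFRT (Φ x)]
        have h2 : Ioo a (Φ x) ∩ Ioo a b = Ioo a (Φ x) :=
          inter_eq_self_of_subset_left
            (fun t ht => ⟨ht.1, lt_trans ht.2 (hbij.mapsTo hxI).2⟩)
        rw [integral_Ioc_eq_integral_Ioo, setIntegral_indicator measurableSet_Ioo, h2]
      · rw [hT3 x hx2, hgeq]
        rw [setIntegral_indicator measurableSet_Ioo]
        have h1 : Iic x ∩ Ioo c e = Ioo c e := by
          apply inter_eq_self_of_subset_right
          intro t ht
          exact le_trans ht.2.le (le_trans hx2 le_rfl)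
        rw [h1]
        have h2 : (∫ t in Ioo c e, (fun t => |Φ' t| • f (Φ t)) t) = ∫ t in Ioo a b, f t := by
          rw [← integral_image_eq_integral_abs_deriv_smul measurableSet_Ioo
            (fun t ht => (hderiv t ht).hasDerivWithinAt) hbij.injOn f, hbij.image_eq]
        rw [h2, hFRT (max x b)]
        have h3 : Ioc a (max x b) ∩ Ioo a b = Ioo a b := by
          apply inter_eq_self_of_subset_right
          intro t ht
          exact ⟨ht.1, le_trans ht.2.le (le_max_right x b)⟩
        rw [setIntegral_indicator measurableSet_Ioo, h3]
  have hH : ∀ x, (∫ t in Iic x, (f t - fΦ t)) = ∫ t in (T x)..x, f t := by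
    intro x
    rw [integral_sub hfint.integrableOn hgint.integrableOn, hFT x,
      intervalIntegral.integral_Iic_sub_Iic hfint.integrableOn hfint.integrableOn]
  -- pointwise bound via enorm
  have hHbnd : ∀ x, (‖∫ t in Iic x, (f t - fΦ t)‖₊ : ℝ≥0∞)
      ≤ ∫⁻ t in Ι (T x) x, (‖f t‖₊ : ℝ≥0∞) := by
    intro x
    rw [hH x]
    calc ((‖∫ t in (T x)..x, f t‖₊ : ℝ≥0∞))
        = (‖∫ t in Ι (T x) x, f t‖₊ : ℝ≥0∞) := by
          rw [intervalIntegral.intervalIntegral_eq_integral_uIoc]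
          split_ifs <;> simp
      _ ≤ ∫⁻ t in Ι (T x) x, (‖f t‖₊ : ℝ≥0∞) := enorm_integral_le_lintegral_enorm _
  have hvolI : ∀ x, volume (Ι (T x) x) ≤ ENNReal.ofReal ε := by
    intro x
    rw [uIoc, volume_Ioc]
    apply ENNReal.ofReal_le_ofReal
    rw [max_sub_min_eq_abs]
    exact hTdist x
  -- the section measure bound
  have hsec : ∀ t, f t ≠ 0 → volume {x | t ∈ Ι (T x) x} ≤ ENNReal.ofReal ε := by
    intro t hft
    have htI : t ∈ Ioo a b := by
      by_contra h
      exact hft (hf0 t h)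
    obtain ⟨s, hs, hΦs⟩ := hbij.surjOn htI
    have hTge : ∀ x, t ≤ T x ↔ s ≤ x := by
      intro x
      rcases le_or_gt x c with hx | hx
      · rw [hT1 x hx]
        constructor
        · intro h
          exfalso
          have : t ≤ a := le_trans h (min_le_right x a)
          linarith [htI.1]
        · intro h
          exfalso
          linarith [hs.1]
      · rcases lt_or_ge x e with hx2 | hx2
        · rw [hT2 x ⟨hx, hx2⟩, ← hΦs]
          constructor
          · intro h
            by_contra hc
            push_neg at hc
            exact absurd (hmono ⟨hx, hx2⟩ hs hc) (not_lt.mpr h)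
          · intro h
            exact hmono.monotoneOn hs ⟨hx, hx2⟩ h
        · rw [hT3 x hx2]
          constructor
          · intro _
            linarith [hs.2]
          · intro _
            exact le_trans htI.2.le (le_max_right x b)
    have hset : {x | t ∈ Ι (T x) x} = Ico t s ∪ Ico s t := by
      ext x
      simp only [mem_setOf_eq, Set.mem_uIoc, mem_union, mem_Ico]
      have h1 : T x < t ↔ x < s := by
        rw [← not_le, ← not_le, hTge x]
      rw [h1, hTge x]
      tauto
    rw [hset]
    have hd : t - s ≤ ε ∨ s - t ≤ ε := by
      have := hεmem s hs
      rw [hΦs] at this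
      rcases abs_le.mp this with ⟨h1, h2⟩
      constructor
      linarith
    calc volume (Ico t s ∪ Ico s t) ≤ volume (Ico t s) + volume (Ico s t) :=
          measure_union_le _ _
      _ = ENNReal.ofReal (s - t) + ENNReal.ofReal (t - s) := by
          rw [Real.volume_Ico, Real.volume_Ico]
      _ ≤ ENNReal.ofReal ε := by
          rcases le_total s t with h | h
          · rw [ENNReal.ofReal_eq_zero.mpr (by linarith), zero_add]
            apply ENNReal.ofReal_le_ofReal
            have := hεmem s hs
            rw [hΦs] at this
            linarith [abs_le.mp this]
          · rw [(by linarith : t - s ≤ 0) |> ENNReal.ofReal_eq_zero.mpr, add_zero]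
            apply ENNReal.ofReal_le_ofReal
            have := hεmem s hs
            rw [hΦs] at this
            linarith [abs_le.mp this]
  rcases eq_or_ne p ∞ with hptop | hptop
  · subst hptop
    rw [eLpNorm_exponent_top, eLpNorm_exponent_top]
    refine essSup_le_of_ae_le _ ?_
    apply ae_of_all
    intro x
    calc ((‖∫ t in Iic x, (f t - fΦ t)‖₊ : ℝ≥0∞))
        ≤ ∫⁻ t in Ι (T x) x, (‖f t‖₊ : ℝ≥0∞) := hHbnd x
      _ ≤ ∫⁻ _ in Ι (T x) x, eLpNormEssSup f volume :=
          lintegral_mono_ae (ae_restrict_of_ae (ae_le_eLpNormEssSup))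
      _ = eLpNormEssSup f volume * volume (Ι (T x) x) := setLIntegral_const _ _
      _ ≤ eLpNormEssSup f volume * ENNReal.ofReal ε := mul_le_mul' le_rfl (hvolI x)
  · have hp0 : p ≠ 0 := by
      intro h
      rw [h] at hp
      exact absurd hp (by simp)
    set r := p.toReal with hrdef
    have hr1 : 1 ≤ r := by
      rw [hrdef, ← ENNReal.toReal_one]
      exact ENNReal.toReal_mono hptop hp
    have hr0 : 0 < r := lt_of_lt_of_le one_pos hr1
    have hεtop : (ENNReal.ofReal ε) ^ (r - 1) ≠ ∞ :=
      ENNReal.rpow_ne_top_of_nonneg (by linarith) ENNReal.ofReal_ne_top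
    -- measurable representative
    have hK0 : AEMeasurable (fun t => (‖f t‖₊ : ℝ≥0∞)) volume := hfm.enorm
    set K : ℝ → ℝ≥0∞ := hK0.mk _ with hKdef
    have hKmeas : Measurable K := hK0.measurable_mk
    have hKae : (fun t => (‖f t‖₊ : ℝ≥0∞)) =ᵐ[volume] K := hK0.ae_eq_mk
    have hinner : ∀ x, (∫⁻ t in Ι (T x) x, (‖f t‖₊ : ℝ≥0∞) ^ r)
        = ∫⁻ t in Ι (T x) x, K t ^ r :=
      fun x => lintegral_congr_ae (ae_restrict_of_ae (hKae.mono fun t ht => by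
        dsimp only at ht ⊢
        rw [ht]))
    -- pointwise Hölder
    have hP1 : ∀ x, ((‖∫ t in Iic x, (f t - fΦ t)‖₊ : ℝ≥0∞)) ^ r
        ≤ (ENNReal.ofReal ε) ^ (r - 1) * ∫⁻ t in Ι (T x) x, K t ^ r := by
      intro x
      rw [← hinner x]
      calc ((‖∫ t in Iic x, (f t - fΦ t)‖₊ : ℝ≥0∞)) ^ r
          ≤ (∫⁻ t in Ι (T x) x, (‖f t‖₊ : ℝ≥0∞)) ^ r :=
            ENNReal.rpow_le_rpow (hHbnd x) hr0.le
        _ ≤ (ENNReal.ofReal ε) ^ (r - 1) * ∫⁻ t in Ι (T x) x, (‖f t‖₊ : ℝ≥0∞) ^ r :=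
            holder_set _ hK0 measurableSet_uIoc hr1 (hvolI x)
    -- Fubini
    set D : Set (ℝ × ℝ) := {q : ℝ × ℝ | q.2 ∈ Ι (T q.1) q.1} with hDdef
    have hDmeas : MeasurableSet D := by
      have : D = {q : ℝ × ℝ | T q.1 ⊓ q.1 < q.2} ∩ {q : ℝ × ℝ | q.2 ≤ T q.1 ⊔ q.1} := by
        ext q
        simp only [hDdef, mem_setOf_eq, mem_inter_iff, uIoc, mem_Ioc]
      rw [this]
      exact MeasurableSet.inter
        (measurableSet_lt ((hTmeas.comp measurable_fst).min measurable_fst) measurable_snd)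
        (measurableSet_le measurable_snd ((hTmeas.comp measurable_fst).max measurable_fst))
    have hsecmeas : ∀ t : ℝ, MeasurableSet {x | t ∈ Ι (T x) x} := by
      intro t
      have : {x | t ∈ Ι (T x) x} = (fun x => (x, t)) ⁻¹' D := rfl
      rw [this]
      exact hDmeas.preimage (measurable_id.prodMk measurable_const)
    have hswap : (∫⁻ x, ∫⁻ t in Ι (T x) x, K t ^ r)
        = ∫⁻ t, K t ^ r * volume {x | t ∈ Ι (T x) x} := by
      have hFm : Measurable (D.indicator (fun q : ℝ × ℝ => K q.2 ^ r)) :=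
        ((hKmeas.comp measurable_snd).pow_const r).indicator hDmeas
      calc (∫⁻ x, ∫⁻ t in Ι (T x) x, K t ^ r)
          = ∫⁻ x, ∫⁻ t, D.indicator (fun q : ℝ × ℝ => K q.2 ^ r) (x, t) := by
            congr 1
            ext x
            rw [← lintegral_indicator measurableSet_uIoc]
            rfl
        _ = ∫⁻ t, ∫⁻ x, D.indicator (fun q : ℝ × ℝ => K q.2 ^ r) (x, t) :=
            lintegral_lintegral_swap hFm.aemeasurable
        _ = ∫⁻ t, K t ^ r * volume {x | t ∈ Ι (T x) x} := by
            congr 1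
            ext t
            have : (fun x => D.indicator (fun q : ℝ × ℝ => K q.2 ^ r) (x, t))
                = {x | t ∈ Ι (T x) x}.indicator (fun _ => K t ^ r) := rfl
            rw [this, lintegral_indicator_const (hsecmeas t)]
    have hP4 : (∫⁻ t, K t ^ r * volume {x | t ∈ Ι (T x) x})
        ≤ (∫⁻ t, (‖f t‖₊ : ℝ≥0∞) ^ r) * ENNReal.ofReal ε := by
      have h1 : (∫⁻ t, K t ^ r * volume {x | t ∈ Ι (T x) x})
          = ∫⁻ t, (‖f t‖₊ : ℝ≥0∞) ^ r * volume {x | t ∈ Ι (T x) x} :=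
        lintegral_congr_ae (hKae.mono fun t ht => by
          dsimp only at ht ⊢
          rw [ht])
      rw [h1, ← lintegral_mul_const' _ _ ENNReal.ofReal_ne_top]
      apply lintegral_mono
      intro t
      by_cases hft : f t = 0
      · simp [hft, ENNReal.zero_rpow_of_pos hr0]
      · exact mul_le_mul' le_rfl (hsec t hft)
    -- combine
    rw [eLpNorm_eq_lintegral_rpow_enorm_toReal hp0 hptop, eLpNorm_eq_lintegral_rpow_enorm_toReal hp0 hptop]
    rw [← hrdef]
    have hchain : (∫⁻ x, ((‖∫ t in Iic x, (f t - fΦ t)‖₊ : ℝ≥0∞)) ^ r)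
        ≤ (ENNReal.ofReal ε) ^ r * ∫⁻ t, (‖f t‖₊ : ℝ≥0∞) ^ r := by
      calc (∫⁻ x, ((‖∫ t in Iic x, (f t - fΦ t)‖₊ : ℝ≥0∞)) ^ r)
          ≤ ∫⁻ x, (ENNReal.ofReal ε) ^ (r - 1) * ∫⁻ t in Ι (T x) x, K t ^ r :=
            lintegral_mono hP1
        _ = (ENNReal.ofReal ε) ^ (r - 1) * ∫⁻ x, ∫⁻ t in Ι (T x) x, K t ^ r :=
            lintegral_const_mul' _ _ hεtop
        _ ≤ (ENNReal.ofReal ε) ^ (r - 1)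
              * ((∫⁻ t, (‖f t‖₊ : ℝ≥0∞) ^ r) * ENNReal.ofReal ε) := by
            rw [hswap]
            exact mul_le_mul' le_rfl hP4
        _ = (ENNReal.ofReal ε) ^ r * ∫⁻ t, (‖f t‖₊ : ℝ≥0∞) ^ r := by
            have h5 : (ENNReal.ofReal ε) ^ (r - 1) * (ENNReal.ofReal ε) ^ (1:ℝ)
                = (ENNReal.ofReal ε) ^ r := by
              rw [← ENNReal.rpow_add_of_nonneg (r - 1) 1 (by linarith) zero_le_one]
              norm_num
            rw [ENNReal.rpow_one] at h5
            rw [mul_comm (∫⁻ t, ((‖f t‖₊ : ℝ≥0∞)) ^ r) (ENNReal.ofReal ε), ← mul_assoc, h5]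
    calc (∫⁻ x, ((‖∫ t in Iic x, (f t - fΦ t)‖₊ : ℝ≥0∞)) ^ r) ^ (1 / r)
        ≤ ((ENNReal.ofReal ε) ^ r * ∫⁻ t, (‖f t‖₊ : ℝ≥0∞) ^ r) ^ (1 / r) :=
          ENNReal.rpow_le_rpow hchain (by positivity)
      _ = (∫⁻ t, (‖f t‖₊ : ℝ≥0∞) ^ r) ^ (1 / r) * ENNReal.ofReal ε := by
          rw [ENNReal.mul_rpow_of_nonneg _ _ (by positivity), ← ENNReal.rpow_mul,
            mul_one_div_cancel hr0.ne', ENNReal.rpow_one, mul_comm]
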